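/- Let y1, y2 be distinct points in R^d and let Y be a finite nontrivial minimal obstacle between y1 and y2. Then for any point x ∈ R^d, either y1 ∉ conv(Y ∪ {x}) or y2 ∉ conv(Y ∪ {x}). -/

import Mathlib

private lemma sum_comb' {d : ℕ} (Y : Finset (Fin d → ℝ)) (wP w1 w2 : (Fin d → ℝ) → ℝ)
    (p c1 c2 : Fin d → ℝ)
    (hP : ∑ y ∈ Y, wP y • y = p) (h1 : ∑ y ∈ Y, w1 y • y = c1)
    (h2 : ∑ y ∈ Y, w2 y • y = c2) (α β γ : ℝ) :
    ∑ y ∈ Y, (α * wP y + β * w1 y + γ * w2 y) • y = α • p + β • c1 + γ • c2 := by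
  rw [← hP, ← h1, ← h2, Finset.smul_sum, Finset.smul_sum, Finset.smul_sum,
    ← Finset.sum_add_distrib, ← Finset.sum_add_distrib]
  exact Finset.sum_congr rfl fun y _ => by
    rw [add_smul, add_smul, mul_smul, mul_smul, mul_smul]

set_option maxHeartbeats 1000000 in
/-- Adding any point to a nontrivial minimal obstacle leaves at least one of
the two endpoints outside the convex hull. -/
theorem stmt_6 (d : ℕ) (y1 y2 : Fin d → ℝ) (hne : y1 ≠ y2) (Y : Finset (Fin d → ℝ))
    (hobs : (convexHull ℝ (Y : Set (Fin d → ℝ)) ∩ convexHull ℝ ({y1, y2} : Set (Fin d → ℝ))).Nonempty)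
    (h1 : y1 ∉ convexHull ℝ (Y : Set (Fin d → ℝ)))
    (h2 : y2 ∉ convexHull ℝ (Y : Set (Fin d → ℝ)))
    (hmin : ∀ y ∈ Y,
      convexHull ℝ ((Y.erase y : Finset (Fin d → ℝ)) : Set (Fin d → ℝ)) ∩
        convexHull ℝ ({y1, y2} : Set (Fin d → ℝ)) = ∅) :
    ∀ x : Fin d → ℝ,
      y1 ∉ convexHull ℝ (insert x (Y : Set (Fin d → ℝ))) ∨
      y2 ∉ convexHull ℝ (insert x (Y : Set (Fin d → ℝ))) := by
  intro x
  by_contra hcon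
  push_neg at hcon
  obtain ⟨hx1, hx2⟩ := hcon
  obtain ⟨p, hpY, hpseg⟩ := hobs
  have hpY' := hpY
  have hYne : (Y : Set (Fin d → ℝ)).Nonempty := by
    rcases Y.eq_empty_or_nonempty with rfl | h
    · simp at hpY
    · exact Finset.coe_nonempty.mpr h
  have hYfne : Y.Nonempty := Finset.coe_nonempty.mp hYne
  rw [convexHull_pair] at hpseg
  obtain ⟨l, m, hl, hm, hlm, hpeq⟩ := hpseg
  rw [convexHull_insert hYne, mem_convexJoin] at hx1 hx2
  obtain ⟨x1', hx1', c1, hc1, hy1s⟩ := hx1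
  rw [Set.mem_singleton_iff] at hx1'; subst hx1'
  obtain ⟨a1, b1, ha1, hb1, hab1, hy1⟩ := hy1s
  obtain ⟨x2', hx2', c2, hc2, hy2s⟩ := hx2
  rw [Set.mem_singleton_iff] at hx2'; subst hx2'
  obtain ⟨a2, b2, ha2, hb2, hab2, hy2⟩ := hy2s
  -- positivity of the x-weights
  have ha1pos : 0 < a1 := by
    rcases ha1.lt_or_eq with h | h
    · exact h
    · exfalso
      have hb1' : b1 = 1 := by linarith
      have : y1 = c1 := by rw [← hy1, ← h, hb1']; simp
      exact h1 (this ▸ hc1)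
  have ha2pos : 0 < a2 := by
    rcases ha2.lt_or_eq with h | h
    · exact h
    · exfalso
      have hb2' : b2 = 1 := by linarith
      have : y2 = c2 := by rw [← hy2, ← h, hb2']; simp
      exact h2 (this ▸ hc2)
  -- eliminate b1, b2, m
  have hb1e : b1 = 1 - a1 := by linarith
  subst hb1e
  have hb2e : b2 = 1 - a2 := by linarith
  subst hb2e
  have hme : m = 1 - l := by linarith
  subst hme
  -- the key scalar t
  set t : ℝ := l * a1 + (1 - l) * a2 with htdef
  have ht : 0 < t := by
    rcases eq_or_lt_of_le hl with h | h
    · rw [htdef, ← h]; ring_nf; linarith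
    · rw [htdef]; nlinarith [mul_pos h ha1pos, mul_nonneg hm ha2pos.le]
  set B : ℝ := (t - a1 * l) * (1 - a1) + a2 * l * (1 - a1) with hBdef
  set C : ℝ := -(a1 * (1 - l) * (1 - a2)) - (t - a2 * (1 - l)) * (1 - a2) with hCdef
  -- extract weight representations
  rw [Finset.convexHull_eq] at hpY hc1 hc2
  obtain ⟨wP, hwP0, hwP1, hwPc⟩ := hpY
  obtain ⟨w1, hw10, hw11, hw1c⟩ := hc1
  obtain ⟨w2, hw20, hw21, hw2c⟩ := hc2
  rw [Finset.centerMass_eq_of_sum_1 _ _ hwP1] at hwPc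
  rw [Finset.centerMass_eq_of_sum_1 _ _ hw11] at hw1c
  rw [Finset.centerMass_eq_of_sum_1 _ _ hw21] at hw2c
  simp only [id_eq] at hwPc hw1c hw2c
  -- the direction weights D
  set D : (Fin d → ℝ) → ℝ := fun y => (a1 - a2) * wP y + B * w1 y + C * w2 y with hDdef
  have hDsum : ∑ y ∈ Y, D y = 0 := by
    simp only [hDdef]
    rw [Finset.sum_add_distrib, Finset.sum_add_distrib, ← Finset.mul_sum, ← Finset.mul_sum,
      ← Finset.mul_sum, hwP1, hw11, hw21, hBdef, hCdef, htdef]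
    ring
  have hkey : (a1 - a2) • p + B • c1 + C • c2 = t • y1 - t • y2 := by
    funext i
    have hpi := congrFun hpeq i
    have h1i := congrFun hy1 i
    have h2i := congrFun hy2 i
    simp only [Pi.add_apply, Pi.sub_apply, Pi.smul_apply, smul_eq_mul] at hpi h1i h2i ⊢
    rw [hBdef, hCdef, htdef]
    linear_combination (-(a1 - a2)) * hpi + ((l * a1 + (1 - l) * a2) - (a1 - a2) * l) * h1i +
      (-((a1 - a2) * (1 - l)) - (l * a1 + (1 - l) * a2)) * h2i
  have hDvec : ∑ y ∈ Y, D y • y = t • y1 - t • y2 := by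
    simp only [hDdef]
    exact (sum_comb' Y wP w1 w2 p c1 c2 hwPc hw1c hw2c (a1 - a2) B C).trans hkey
  -- the segment parametrization and the set of parameters hitting conv Y
  set g : ℝ → (Fin d → ℝ) := fun s => (1 - s) • y1 + s • y2 with hgdef
  have hgcont : Continuous g := by
    rw [hgdef]; fun_prop
  set T : Set ℝ := Set.Icc (0 : ℝ) 1 ∩ g ⁻¹' (convexHull ℝ (Y : Set (Fin d → ℝ))) with hTdef
  have hTclosed : IsClosed T :=
    isClosed_Icc.inter (((Y.finite_toSet.isClosed_convexHull (𝕜 := ℝ))).preimage hgcont)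
  have hTne : T.Nonempty := by
    refine ⟨1 - l, ⟨by constructor <;> linarith, ?_⟩⟩
    show g (1 - l) ∈ convexHull ℝ (Y : Set (Fin d → ℝ))
    have : g (1 - l) = p := by
      rw [hgdef]
      simp only
      rw [show (1 : ℝ) - (1 - l) = l by ring, hpeq]
    rw [this]; exact hpY'
  have hbdd : BddBelow T := ⟨0, fun s hs => hs.1.1⟩
  set t0 : ℝ := sInf T with ht0def
  have ht0T : t0 ∈ T := hTclosed.csInf_mem hTne hbdd
  obtain ⟨⟨ht00, ht01⟩, hqY⟩ := ht0T
  have ht0pos : 0 < t0 := by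
    rcases ht00.lt_or_eq with h | h
    · exact h
    · exfalso
      apply h1
      have : g t0 = y1 := by rw [hgdef, ← h]; simp
      rw [← this]; exact hqY
  -- g t0 lies in conv {y1, y2}
  have hqpair : g t0 ∈ convexHull ℝ ({y1, y2} : Set (Fin d → ℝ)) := by
    rw [convexHull_pair]
    exact ⟨1 - t0, t0, by linarith, ht00, by ring, by rw [hgdef]⟩
  -- weights of g t0, all strictly positive by minimality
  have hqY' : g t0 ∈ convexHull ℝ (Y : Set (Fin d → ℝ)) := hqY
  rw [Finset.convexHull_eq] at hqY'
  obtain ⟨wq, hwq0, hwq1, hwqc⟩ := hqY'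
  rw [Finset.centerMass_eq_of_sum_1 _ _ hwq1] at hwqc
  simp only [id_eq] at hwqc
  have hwqpos : ∀ z ∈ Y, 0 < wq z := by
    intro z hz
    rcases (hwq0 z hz).lt_or_eq with h | h
    · exact h
    · exfalso
      have hsum' : ∑ y ∈ Y.erase z, wq y = 1 := by
        rw [Finset.sum_erase _ h.symm]; exact hwq1
      have hmem : g t0 ∈ convexHull ℝ ((Y.erase z : Finset (Fin d → ℝ)) : Set (Fin d → ℝ)) := by
        rw [Finset.convexHull_eq]
        refine ⟨wq, fun y hy => hwq0 y (Finset.mem_of_mem_erase hy), hsum', ?_⟩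
        rw [Finset.centerMass_eq_of_sum_1 _ _ hsum']
        simp only [id_eq]
        calc ∑ x ∈ Y.erase z, wq x • x = ∑ x ∈ Y, wq x • x :=
              Finset.sum_erase Y (by rw [← h, zero_smul])
          _ = g t0 := hwqc
      exact Set.eq_empty_iff_forall_notMem.mp (hmin z hz) _ ⟨hmem, hqpair⟩
  -- choose a small ε
  set ε0 : ℝ := Y.inf' hYfne (fun y => wq y / (|D y| + 1)) with hε0def
  have hε0pos : 0 < ε0 := by
    rw [hε0def, Finset.lt_inf'_iff]
    intro y hy
    exact div_pos (hwqpos y hy) (by positivity)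
  set ε : ℝ := min ε0 (t0 / t) / 2 with hεdef
  have hεpos : 0 < ε := by
    rw [hεdef]
    exact div_pos (lt_min hε0pos (div_pos ht0pos ht)) two_pos
  clear_value t B C D g T t0 ε0 ε
  have hεle : ε ≤ ε0 / 2 := by
    rw [hεdef]
    have := min_le_left ε0 (t0 / t)
    linarith
  have hεtlt : ε * t < t0 := by
    have hh1 : ε ≤ t0 / t / 2 := by
      rw [hεdef]
      have := min_le_right ε0 (t0 / t)
      linarith
    have hh2 : ε * t ≤ t0 / t / 2 * t := mul_le_mul_of_nonneg_right hh1 ht.le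
    have hh3 : t0 / t / 2 * t = t0 / 2 := by
      field_simp
    have hh4 : ε * t ≤ t0 / 2 := hh3 ▸ hh2
    linarith
  -- the perturbed weights are positive
  have hw'pos : ∀ y ∈ Y, 0 < wq y + ε * D y := by
    intro y hy
    have hle : ε0 ≤ wq y / (|D y| + 1) := by
      rw [hε0def]
      exact Finset.inf'_le _ hy
    have habs : (0 : ℝ) ≤ |D y| := abs_nonneg _
    have hA : ε0 * (|D y| + 1) ≤ wq y := (le_div_iff₀ (by positivity)).mp hle
    have hB2 : ε * -|D y| ≤ ε * D y := mul_le_mul_of_nonneg_left (neg_abs_le _) hεpos.le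
    linarith [mul_le_mul_of_nonneg_right hεle habs, hA, hB2, hwqpos y hy, hε0pos, habs]
  -- the smaller parameter t0 - ε * t is still in T : contradiction
  have hsum'' : ∑ y ∈ Y, (wq y + ε * D y) = 1 := by
    rw [Finset.sum_add_distrib, hwq1, ← Finset.mul_sum, hDsum, mul_zero, add_zero]
  have ht'T : t0 - ε * t ∈ T := by
    rw [hTdef]
    refine ⟨⟨by linarith, by linarith [mul_pos hεpos ht]⟩, ?_⟩
    rw [Set.mem_preimage]
    · rw [Finset.convexHull_eq]
      refine ⟨fun y => wq y + ε * D y, fun y hy => (hw'pos y hy).le, hsum'', ?_⟩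
      rw [Finset.centerMass_eq_of_sum_1 _ _ hsum'']
      simp only [id_eq]
      have hsplit : ∑ y ∈ Y, (wq y + ε * D y) • y
          = (∑ y ∈ Y, wq y • y) + ε • (∑ y ∈ Y, D y • y) := by
        rw [Finset.smul_sum, ← Finset.sum_add_distrib]
        exact Finset.sum_congr rfl fun y _ => by rw [add_smul, mul_smul]
      rw [hsplit, hwqc, hDvec]
      funext i
      simp only [hgdef, Pi.add_apply, Pi.sub_apply, Pi.smul_apply, smul_eq_mul]
      ring
  have hfin : sInf T ≤ t0 - ε * t := csInf_le hbdd ht'T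
  rw [← ht0def] at hfin
  linarith [mul_pos hεpos ht]
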